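/- For a univariate polynomial f ∈ ℚ[x] of degree n with n distinct complex roots, the Hermite matrix in the basis 1, x, …, x^{n-1} is the Hankel matrix whose (i,j) entry is the power sum p_{i+j} of the roots of f, and its signature equals the number of distinct real roots of f. -/

import Mathlib

set_option synthInstance.maxHeartbeats 1000000
set_option maxHeartbeats 1000000

open Polynomial Matrix Finset

namespace HermiteAux


variable {n : ℕ}

/-- span of coordinate vectors indexed by `s` -/
noncomputable def coordSpan (s : Finset (Fin n)) : Submodule ℝ (Fin n → ℝ) :=
  Submodule.span ℝ ((Pi.basisFun ℝ (Fin n)) '' (s : Set (Fin n)))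

lemma mem_coordSpan {s : Finset (Fin n)} {x : Fin n → ℝ} :
    x ∈ coordSpan s ↔ ∀ j ∉ s, x j = 0 := by
  rw [coordSpan, Module.Basis.mem_span_image]
  constructor
  · intro h j hj
    have := Finsupp.support_subset_iff.mp h j (by simpa using hj)
    simpa [Pi.basisFun_repr] using this
  · intro h
    refine Finsupp.support_subset_iff.mpr fun j hj => ?_
    simpa [Pi.basisFun_repr] using h j (by simpa using hj)

lemma finrank_coordSpan (s : Finset (Fin n)) :
    Module.finrank ℝ (coordSpan s) = s.card := by
  rw [coordSpan]
  rw [Set.image_eq_range]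
  rw [finrank_span_eq_card]
  · simp
  · exact ((Pi.basisFun ℝ (Fin n)).linearIndependent.comp _ Subtype.coe_injective)

lemma finrank_comap_eq {M : Matrix (Fin n) (Fin n) ℝ} (hM : IsUnit M.det)
    (W : Submodule ℝ (Fin n → ℝ)) :
    Module.finrank ℝ (W.comap M.mulVecLin) = Module.finrank ℝ W := by
  have h1 : M⁻¹ * M = 1 := nonsing_inv_mul M hM
  have h2 : M * M⁻¹ = 1 := mul_nonsing_inv M hM
  let e : (Fin n → ℝ) ≃ₗ[ℝ] (Fin n → ℝ) :=
    LinearEquiv.ofLinear M.mulVecLin M⁻¹.mulVecLin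
      (LinearMap.ext fun x => by
        show M.mulVec (M⁻¹.mulVec x) = x
        rw [Matrix.mulVec_mulVec, h2, Matrix.one_mulVec])
      (LinearMap.ext fun x => by
        show M⁻¹.mulVec (M.mulVec x) = x
        rw [Matrix.mulVec_mulVec, h1, Matrix.one_mulVec])
  have : W.comap M.mulVecLin = W.comap (e : (Fin n → ℝ) →ₗ[ℝ] (Fin n → ℝ)) := rfl
  rw [this, Submodule.comap_equiv_eq_map_symm]
  exact LinearEquiv.finrank_map_eq _ _

lemma quad_decomp {M : Matrix (Fin n) (Fin n) ℝ} {d : Fin n → ℝ}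
    (x : Fin n → ℝ) :
    x ⬝ᵥ (Mᵀ * Matrix.diagonal d * M).mulVec x = ∑ j, d j * (M.mulVec x j) ^ 2 := by
  rw [Matrix.mul_assoc, ← Matrix.mulVec_mulVec, Matrix.dotProduct_mulVec,
    Matrix.vecMul_transpose, ← Matrix.mulVec_mulVec]
  simp [dotProduct, Matrix.mulVec_diagonal, sq]
  ring_nf
  exact Finset.sum_congr rfl fun j _ => by ring

lemma inertia_pos_le {A M₁ M₂ : Matrix (Fin n) (Fin n) ℝ} {d₁ d₂ : Fin n → ℝ}
    (hM₁ : IsUnit M₁.det) (hM₂ : IsUnit M₂.det)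
    (h1 : A = M₁ᵀ * Matrix.diagonal d₁ * M₁)
    (h2 : A = M₂ᵀ * Matrix.diagonal d₂ * M₂) :
    (univ.filter fun j => 0 < d₂ j).card ≤ (univ.filter fun j => 0 < d₁ j).card := by
  classical
  set s₂ : Finset (Fin n) := univ.filter fun j => 0 < d₂ j with hs₂
  set t₁ : Finset (Fin n) := univ.filter fun j => ¬ 0 < d₁ j with ht₁
  set U : Submodule ℝ (Fin n → ℝ) := (coordSpan s₂).comap M₂.mulVecLin with hU
  set W : Submodule ℝ (Fin n → ℝ) := (coordSpan t₁).comap M₁.mulVecLin with hW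
  have hUq : ∀ x ∈ U, x ≠ 0 → 0 < x ⬝ᵥ A.mulVec x := by
    intro x hx hx0
    rw [h2, quad_decomp]
    have hy : ∀ j ∉ s₂, M₂.mulVec x j = 0 := mem_coordSpan.mp hx
    have hy0 : M₂.mulVec x ≠ 0 := by
      intro h
      exact hx0 (Matrix.mulVec_injective_iff_isUnit.mpr ((Matrix.isUnit_iff_isUnit_det _).mpr hM₂) (by simpa using h))
    obtain ⟨j, hj⟩ : ∃ j, M₂.mulVec x j ≠ 0 := by
      by_contra h; push_neg at h; exact hy0 (funext h)
    have hjs : j ∈ s₂ := by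
      by_contra h; exact hj (hy j h)
    refine Finset.sum_pos' (fun i _ => ?_) ⟨j, Finset.mem_univ j, ?_⟩
    · by_cases hi : i ∈ s₂
      · have : 0 < d₂ i := by simpa [hs₂] using hi
        positivity
      · simp [hy i hi]
    · have : 0 < d₂ j := by simpa [hs₂] using hjs
      have : 0 < (M₂.mulVec x j) ^ 2 := by positivity
      positivity
  have hWq : ∀ x ∈ W, x ⬝ᵥ A.mulVec x ≤ 0 := by
    intro x hx
    rw [h1, quad_decomp]
    have hy : ∀ j ∉ t₁, M₁.mulVec x j = 0 := mem_coordSpan.mp hx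
    refine Finset.sum_nonpos fun j _ => ?_
    by_cases hj : j ∈ t₁
    · have : d₁ j ≤ 0 := le_of_not_gt (by simpa [ht₁] using hj)
      have h2 : 0 ≤ (M₁.mulVec x j)^2 := sq_nonneg _
      exact mul_nonpos_of_nonpos_of_nonneg this h2
    · simp [hy j hj]
  have hdisj : U ⊓ W = ⊥ := by
    rw [Submodule.eq_bot_iff]
    intro x hx
    by_contra h
    exact absurd (hWq x hx.2) (not_le.mpr (hUq x hx.1 h))
  have hdim : Module.finrank ℝ U + Module.finrank ℝ W ≤ n := by
    have := Submodule.finrank_sup_add_finrank_inf_eq U W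
    rw [hdisj] at this
    simp at this
    calc Module.finrank ℝ U + Module.finrank ℝ W = Module.finrank ℝ (U ⊔ W : Submodule ℝ _) := this.symm
    _ ≤ Module.finrank ℝ (Fin n → ℝ) := Submodule.finrank_le _
    _ = n := by simp
  rw [hU, hW, finrank_comap_eq hM₂, finrank_comap_eq hM₁, finrank_coordSpan,
    finrank_coordSpan] at hdim
  have hcard : (univ.filter fun j => 0 < d₁ j).card + t₁.card = n := by
    have := Finset.card_filter_add_card_filter_not (s := (univ : Finset (Fin n)))
      (p := fun j => 0 < d₁ j)
    simpa only [Finset.card_univ, Fintype.card_fin] using this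
  have hle : (univ.filter fun j => 0 < d₁ j).card ≤ n := by
    calc (univ.filter fun j => 0 < d₁ j).card ≤ (univ : Finset (Fin n)).card := Finset.card_filter_le _ _
    _ = n := by simp
  omega

lemma inertia_pos_eq {A M₁ M₂ : Matrix (Fin n) (Fin n) ℝ} {d₁ d₂ : Fin n → ℝ}
    (hM₁ : IsUnit M₁.det) (hM₂ : IsUnit M₂.det)
    (h1 : A = M₁ᵀ * Matrix.diagonal d₁ * M₁)
    (h2 : A = M₂ᵀ * Matrix.diagonal d₂ * M₂) :
    (univ.filter fun j => 0 < d₁ j).card = (univ.filter fun j => 0 < d₂ j).card :=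
  le_antisymm (inertia_pos_le hM₂ hM₁ h2 h1) (inertia_pos_le hM₁ hM₂ h1 h2)

lemma inertia_neg_eq {A M₁ M₂ : Matrix (Fin n) (Fin n) ℝ} {d₁ d₂ : Fin n → ℝ}
    (hM₁ : IsUnit M₁.det) (hM₂ : IsUnit M₂.det)
    (h1 : A = M₁ᵀ * Matrix.diagonal d₁ * M₁)
    (h2 : A = M₂ᵀ * Matrix.diagonal d₂ * M₂) :
    (univ.filter fun j => d₁ j < 0).card = (univ.filter fun j => d₂ j < 0).card := by
  have hneg : ∀ d : Fin n → ℝ, Matrix.diagonal (-d) = -Matrix.diagonal d := by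
    intro d; ext i j; by_cases h : i = j <;> simp [Matrix.diagonal_apply, h]
  have h1' : -A = M₁ᵀ * Matrix.diagonal (-d₁) * M₁ := by
    rw [h1, hneg]; noncomm_ring
  have h2' : -A = M₂ᵀ * Matrix.diagonal (-d₂) * M₂ := by
    rw [h2, hneg]; noncomm_ring
  have := inertia_pos_eq hM₁ hM₂ h1' h2'
  simpa [neg_pos] using this



variable {K : Type*} [Field K]

/-- entries of the companion matrix -/
lemma leftMulMatrix_entry {n : ℕ} (q : K[X]) (hq : q.Monic) (hn : q.natDegree = n)
    (i j : Fin n) :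
    Algebra.leftMulMatrix ((AdjoinRoot.powerBasis' hq).basis.reindex (finCongr hn))
      (AdjoinRoot.root q) i j = ((X ^ ((j : ℕ) + 1)) %ₘ q).coeff i := by
  have key : AdjoinRoot.root q
      * ((AdjoinRoot.powerBasis' hq).basis.reindex (finCongr hn)) j
      = AdjoinRoot.mk q (X ^ ((j : ℕ) + 1)) := by
    rw [Module.Basis.reindex_apply, (AdjoinRoot.powerBasis' hq).basis_eq_pow]
    show AdjoinRoot.mk q X * AdjoinRoot.mk q X ^ (((finCongr hn).symm j : Fin q.natDegree) : ℕ) = _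
    rw [← map_pow, ← _root_.map_mul, ← pow_succ']
    rfl
  rw [Algebra.leftMulMatrix_eq_repr_mul, key, Module.Basis.repr_reindex_apply]
  have h2 := AdjoinRoot.powerBasisAux'_repr_apply_to_fun hq
    (AdjoinRoot.mk q (X ^ ((j : ℕ) + 1))) ((finCongr hn).symm i)
  rw [AdjoinRoot.modByMonicHom_mk] at h2
  exact h2.trans rfl


lemma trace_companion_pow {n : ℕ} (hn : 0 < n) (g : ℂ[X]) (hg : g.Monic)
    (hdeg : g.natDegree = n) (α : Fin n → ℂ) (hα : ∀ a, g.IsRoot (α a))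
    (hinj : Function.Injective α) (k : ℕ) :
    Matrix.trace ((Algebra.leftMulMatrix
      ((AdjoinRoot.powerBasis' hg).basis.reindex (finCongr hdeg))
      (AdjoinRoot.root g)) ^ k) = ∑ a, α a ^ k := by
  set CC := Algebra.leftMulMatrix
      ((AdjoinRoot.powerBasis' hg).basis.reindex (finCongr hdeg))
      (AdjoinRoot.root g) with hCCdef
  set V := Matrix.vandermonde α with hV
  have hg1 : g ≠ 1 := by
    intro h
    rw [h, natDegree_one] at hdeg
    omega
  have hVC : V * CC = Matrix.diagonal α * V := by
    ext a j
    rw [Matrix.mul_apply, Matrix.diagonal_mul]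
    have : ∀ l, V a l * CC l j = (X ^ ((j:ℕ)+1) %ₘ g).coeff l * α a ^ (l:ℕ) := by
      intro l
      rw [hCCdef, leftMulMatrix_entry g hg hdeg]
      simp [hV, Matrix.vandermonde]
      ring
    rw [Finset.sum_congr rfl (fun l _ => this l)]
    have hlt : (X ^ ((j:ℕ)+1) %ₘ g).natDegree < n := by
      have := natDegree_modByMonic_lt (X ^ ((j:ℕ)+1)) hg hg1
      omega
    have heval := eval_eq_sum_range' hlt (α a)
    rw [Fin.sum_univ_eq_sum_range (fun l => (X ^ ((j:ℕ)+1) %ₘ g).coeff l * α a ^ l)]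
    rw [← heval]
    rw [modByMonic_eq_sub_mul_div _ g, eval_sub, eval_mul, (hα a).eq_zero]
    simp [hV, Matrix.vandermonde, pow_succ]
    ring
  have hdet : IsUnit V.det :=
    isUnit_iff_ne_zero.mpr (Matrix.det_vandermonde_ne_zero_iff.mpr hinj)
  have hCC : CC = V⁻¹ * (Matrix.diagonal α * V) := by
    rw [← hVC, ← Matrix.mul_assoc, Matrix.nonsing_inv_mul _ hdet, Matrix.one_mul]
  have hpow : ∀ m : ℕ, CC ^ m = V⁻¹ * (Matrix.diagonal α) ^ m * V := by
    intro m
    induction m with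
    | zero => simp [Matrix.nonsing_inv_mul _ hdet]
    | succ m ih =>
      rw [pow_succ, ih, hCC, pow_succ]
      calc V⁻¹ * Matrix.diagonal α ^ m * V * (V⁻¹ * (Matrix.diagonal α * V))
          = V⁻¹ * Matrix.diagonal α ^ m * (V * V⁻¹) * (Matrix.diagonal α * V) := by
            noncomm_ring
        _ = V⁻¹ * (Matrix.diagonal α ^ m * Matrix.diagonal α) * V := by
            rw [Matrix.mul_nonsing_inv _ hdet]; noncomm_ring
  rw [hpow k, Matrix.trace_mul_comm (V⁻¹ * Matrix.diagonal α ^ k) V, ← Matrix.mul_assoc,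
    Matrix.mul_nonsing_inv _ hdet, Matrix.one_mul, Matrix.diagonal_pow, Matrix.trace_diagonal]
  simp

lemma trace_map_eq_sum_pow {n : ℕ} (hn : 0 < n) (f : ℚ[X]) (hmonic : f.Monic)
    (hdeg : f.natDegree = n) (α : Fin n → ℂ)
    (hα : ∀ a, (f.map (algebraMap ℚ ℂ)).IsRoot (α a))
    (hinj : Function.Injective α) (k : ℕ) :
    algebraMap ℚ ℂ (LinearMap.trace ℚ (AdjoinRoot f)
      (LinearMap.mulLeft ℚ (AdjoinRoot.mk f (X ^ k)))) = ∑ a, α a ^ k := by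
  have hf0 : f ≠ 0 := hmonic.ne_zero
  set φ := algebraMap ℚ ℂ
  set g := f.map φ with hgdef
  have hgmonic : g.Monic := hmonic.map φ
  have hgdeg : g.natDegree = n := by rw [hgdef, natDegree_map, hdeg]
  set bQ := (AdjoinRoot.powerBasis' hmonic).basis.reindex (finCongr hdeg) with hbQ
  rw [LinearMap.trace_eq_matrix_trace ℚ bQ, Algebra.toMatrix_lmul_eq]
  have hmk : AdjoinRoot.mk f (X ^ k) = (AdjoinRoot.root f) ^ k := by
    rw [AdjoinRoot.root, ← map_pow]
  rw [hmk, map_pow]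
  have htr : ∀ (M : Matrix (Fin n) (Fin n) ℚ),
      φ (Matrix.trace M) = Matrix.trace (M.map φ) := by
    intro M
    rw [Matrix.trace, Matrix.trace, map_sum]
    rfl
  rw [htr]
  have hmp : (Algebra.leftMulMatrix bQ (AdjoinRoot.root f) ^ k).map φ
      = ((Algebra.leftMulMatrix bQ (AdjoinRoot.root f)).map φ) ^ k := by
    rw [← RingHom.mapMatrix_apply, ← RingHom.mapMatrix_apply, map_pow]
  rw [hmp]
  have hmap : (Algebra.leftMulMatrix bQ (AdjoinRoot.root f)).map φ
      = Algebra.leftMulMatrix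
        ((AdjoinRoot.powerBasis' hgmonic).basis.reindex (finCongr hgdeg))
        (AdjoinRoot.root g) := by
    ext i j
    rw [Matrix.map_apply, hbQ, leftMulMatrix_entry f hmonic hdeg,
      leftMulMatrix_entry g hgmonic hgdeg, ← coeff_map,
      Polynomial.map_modByMonic _ hmonic, Polynomial.map_pow, map_X]
  rw [hmap]
  exact trace_companion_pow hn g hgmonic hgdeg α hα hinj k


/-- The real matrix whose rows encode real/imaginary parts of powers of roots. -/
noncomputable def Bmat {n : ℕ} (α : Fin n → ℂ) : Matrix (Fin n) (Fin n) ℝ :=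
  fun a i => if (α a).im < 0 then (α a ^ (i : ℕ)).im else (α a ^ (i : ℕ)).re

/-- Weights for the decomposition. -/
noncomputable def dvec {n : ℕ} (α : Fin n → ℂ) : Fin n → ℝ :=
  fun a => if (α a).im = 0 then 1 else if 0 < (α a).im then 2 else -2

lemma key_sum {n : ℕ} {α : Fin n → ℂ} {σ : Fin n → Fin n}
    (hinj : Function.Injective α) (hσσ : Function.Involutive σ)
    (hσα : ∀ a, α (σ a) = (starRingEnd ℂ) (α a)) (i j : Fin n) :
    ∑ a, (α a ^ ((i : ℕ) + (j : ℕ))).re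
      = ∑ a, Bmat α a i * (dvec α a * Bmat α a j) := by
  classical
  set m := (i : ℕ) + (j : ℕ) with hm
  set F : Fin n → ℝ := fun a => (α a ^ m).re with hF
  set G : Fin n → ℝ := fun a => Bmat α a i * (dvec α a * Bmat α a j) with hG
  have himσ : ∀ a, (α (σ a)).im = -(α a).im := by
    intro a; rw [hσα a]; simp
  have hpowσ : ∀ (a : Fin n) (t : ℕ), α (σ a) ^ t = (starRingEnd ℂ) (α a ^ t) := by
    intro a t; rw [hσα a, ← map_pow]
  have hFG : ∀ a, F a + F (σ a) = G a + G (σ a) := by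
    intro a
    by_cases h0 : (α a).im = 0
    · have hσa : σ a = a := hinj (by rw [hσα a, Complex.conj_eq_iff_im.mpr h0])
      rw [hσa]
      have hre : α a = ((α a).re : ℂ) := Complex.ext rfl (by simp [h0])
      have hpow : ∀ t : ℕ, α a ^ t = ((((α a).re : ℝ) ^ t : ℝ) : ℂ) := by
        intro t; conv_lhs => rw [hre]
        rw [← Complex.ofReal_pow]
      have hB : ∀ t : Fin n, Bmat α a t = (α a).re ^ (t : ℕ) := by
        intro t
        rw [Bmat, if_neg (by rw [h0]; exact lt_irrefl 0), hpow]
        simp [← Complex.ofReal_pow]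
      have hFa : F a = (α a).re ^ m := by
        show (α a ^ m).re = _
        rw [hpow m]; simp [← Complex.ofReal_pow]
      rw [hFa, hG]
      simp only [hB, dvec, if_pos h0, hm, pow_add]
      ring
    · have hFσ : F (σ a) = F a := by
        rw [hF]; simp only [hpowσ a m, Complex.conj_re]
      set ri := (α a ^ (i : ℕ)).re
      set ii := (α a ^ (i : ℕ)).im
      set rj := (α a ^ (j : ℕ)).re
      set ij := (α a ^ (j : ℕ)).im
      have hFa : F a = ri * rj - ii * ij := by
        show (α a ^ m).re = _
        rw [hm, pow_add, Complex.mul_re]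
      by_cases hpos : 0 < (α a).im
      · have hBa : ∀ t : Fin n, Bmat α a t = (α a ^ (t : ℕ)).re := by
          intro t; rw [Bmat, if_neg (asymm hpos)]
      

        have himσa : (α (σ a)).im < 0 := by rw [himσ a]; linarith
        have hBσ : ∀ t : Fin n, Bmat α (σ a) t = -(α a ^ (t : ℕ)).im := by
          intro t; rw [Bmat, if_pos himσa, hσα a]; simp [← map_pow]
        have hda : dvec α a = 2 := by rw [dvec, if_neg h0, if_pos hpos]
        have hdσ : dvec α (σ a) = -2 := by
          rw [dvec, if_neg (by rw [himσ a]; simpa using h0),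
            if_neg (by rw [himσ a]; simp; linarith)]
        rw [hFσ, hG]
        simp only [hBa, hBσ, hda, hdσ, hFa]
        ring
      · have hneg : (α a).im < 0 := lt_of_le_of_ne (le_of_not_gt hpos) h0
        have hBa : ∀ t : Fin n, Bmat α a t = (α a ^ (t : ℕ)).im := by
          intro t; rw [Bmat, if_pos hneg]
        have himσa : 0 < (α (σ a)).im := by rw [himσ a]; linarith
        have hBσ : ∀ t : Fin n, Bmat α (σ a) t = (α a ^ (t : ℕ)).re := by
          intro t; rw [Bmat, if_neg (asymm himσa), hσα a]; simp [← map_pow]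
        have hda : dvec α a = -2 := by
          rw [dvec, if_neg h0, if_neg hpos]
        have hdσ : dvec α (σ a) = 2 := by
          rw [dvec, if_neg (by rw [himσ a]; simpa using h0), if_pos himσa]
        rw [hFσ, hG]
        simp only [hBa, hBσ, hda, hdσ, hFa]
        ring
  have hsumF : ∑ a, F (σ a) = ∑ a, F a := by
    have := Equiv.sum_comp hσσ.toPerm F
    simpa [Function.Involutive.coe_toPerm] using this
  have hsumG : ∑ a, G (σ a) = ∑ a, G a := by
    have := Equiv.sum_comp hσσ.toPerm G
    simpa [Function.Involutive.coe_toPerm] using this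
  have h2 : ∑ a, (F a + F (σ a)) = ∑ a, (G a + G (σ a)) :=
    Finset.sum_congr rfl fun a _ => hFG a
  rw [Finset.sum_add_distrib, Finset.sum_add_distrib, hsumF, hsumG] at h2
  linarith

lemma isUnit_Bmat_det {n : ℕ} {α : Fin n → ℂ} {σ : Fin n → Fin n}
    (hinj : Function.Injective α) (hσσ : Function.Involutive σ)
    (hσα : ∀ a, α (σ a) = (starRingEnd ℂ) (α a)) :
    IsUnit (Bmat α).det := by
  classical
  have hVdet : (Matrix.vandermonde α).det ≠ 0 :=
    Matrix.det_vandermonde_ne_zero_iff.mpr hinj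
  have himσ : ∀ a, (α (σ a)).im = -(α a).im := by
    intro a; rw [hσα a]; simp
  have hker : ∀ x : Fin n → ℝ, (Bmat α).mulVec x = 0 → x = 0 := by
    intro x hx
    have hrow : ∀ a, ∑ i, Bmat α a i * x i = 0 := by
      intro a
      have := congrFun hx a
      simpa [Matrix.mulVec, dotProduct] using this
    have hre_row : ∀ a, ¬ (α a).im < 0 → ∑ i : Fin n, (α a ^ (i : ℕ)).re * x i = 0 := by
      intro a ha
      have := hrow a
      simpa [Bmat, if_neg ha] using this
    have him_row : ∀ a, (α a).im < 0 → ∑ i : Fin n, (α a ^ (i : ℕ)).im * x i = 0 := by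
      intro a ha
      have := hrow a
      simpa [Bmat, if_pos ha] using this
    set xc : Fin n → ℂ := fun i => ((x i : ℝ) : ℂ) with hxc
    have hV : (Matrix.vandermonde α).mulVec xc = 0 := by
      funext a
      have hsum : (Matrix.vandermonde α).mulVec xc a = ∑ i : Fin n, α a ^ (i : ℕ) * xc i := by
        simp [Matrix.mulVec, dotProduct, Matrix.vandermonde]
      rw [hsum]
      have hRe : (∑ i : Fin n, α a ^ (i : ℕ) * xc i).re = ∑ i : Fin n, (α a ^ (i : ℕ)).re * x i := by
        rw [Complex.re_sum]
        exact Finset.sum_congr rfl fun i _ => by simp [hxc, Complex.mul_re]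
      have hIm : (∑ i : Fin n, α a ^ (i : ℕ) * xc i).im = ∑ i : Fin n, (α a ^ (i : ℕ)).im * x i := by
        rw [Complex.im_sum]
        exact Finset.sum_congr rfl fun i _ => by simp [hxc, Complex.mul_im]
      apply Complex.ext
      · rw [hRe]
        by_cases h : (α a).im < 0
        · have hσ' : ¬ (α (σ a)).im < 0 := by rw [himσ a]; simp; linarith
          have := hre_row (σ a) hσ'
          have hconj : ∀ i : Fin n, (α (σ a) ^ (i : ℕ)).re = (α a ^ (i : ℕ)).re := by
            intro i; rw [hσα a]; simp [← map_pow]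
          rw [Finset.sum_congr rfl (fun i _ => by rw [hconj i])] at this
          simpa using this
        · simpa using hre_row a h
      · rw [hIm]
        by_cases h0 : (α a).im = 0
        · have hzero : ∀ i : Fin n, (α a ^ (i : ℕ)).im = 0 := by
            intro i
            rw [show α a = ((α a).re : ℂ) from Complex.ext rfl (by simp [h0]),
              ← Complex.ofReal_pow, Complex.ofReal_im]
          simp [hzero]
        · by_cases h : (α a).im < 0
          · simpa using him_row a h
          · have hσ' : (α (σ a)).im < 0 := by
              rw [himσ a]
              rcases lt_or_eq_of_le (not_lt.mp h) with h' | h'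
              · linarith
              · exact absurd h'.symm h0
            have := him_row (σ a) hσ'
            have hconj : ∀ i : Fin n, (α (σ a) ^ (i : ℕ)).im = -(α a ^ (i : ℕ)).im := by
              intro i; rw [hσα a]; simp [← map_pow]
            rw [Finset.sum_congr rfl (fun i _ => by rw [hconj i])] at this
            simp only [neg_mul] at this
            rw [Finset.sum_neg_distrib] at this
            simpa using this
    have hxc0 : xc = 0 := Matrix.eq_zero_of_mulVec_eq_zero hVdet hV
    funext i
    have := congrFun hxc0 i
    simpa [hxc] using this
  have hinjV : Function.Injective (Bmat α).mulVec := by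
    intro x y hxy
    have h := hker (x - y) (by rw [Matrix.mulVec_sub, hxy, sub_self])
    exact sub_eq_zero.mp h
  exact (Matrix.isUnit_iff_isUnit_det _).mp (Matrix.mulVec_injective_iff_isUnit.mp hinjV)

end HermiteAux

open HermiteAux

/-- For a monic univariate `f ∈ ℚ[x]` of degree `n` with `n` distinct complex
roots, the Hermite matrix of `ℚ[x]/(f)` in the basis `1, x, …, x^{n-1}` is the
Hankel matrix of power sums `p_{i+j}` of the roots of `f`, and the signature of
that (real symmetric) Hankel matrix equals the number of distinct real roots of
`f`. -/
theorem hermite_matrix_hankel_and_signature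
    (n : ℕ) (f : Polynomial ℚ) (hmonic : f.Monic) (hdeg : f.natDegree = n)
    (hsep : (f.map (algebraMap ℚ ℂ)).roots.toFinset.card = n)
    (p : ℕ → ℂ) (hp : ∀ k, p k = ((f.map (algebraMap ℚ ℂ)).roots.map (· ^ k)).sum)
    (hFD : FiniteDimensional ℚ (Polynomial ℚ ⧸ Ideal.span {f}))
    (Hr : Matrix (Fin n) (Fin n) ℝ)
    (hHr : ∀ i j : Fin n, (Hr i j : ℂ) = p (i.1 + j.1))
    (hherm : Hr.IsHermitian) :
    (∀ i j : Fin n,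
      (algebraMap ℚ ℂ) (LinearMap.trace ℚ (Polynomial ℚ ⧸ Ideal.span {f})
        (LinearMap.mulLeft ℚ (Ideal.Quotient.mk (Ideal.span {f}) (X ^ (i.1 + j.1)))))
        = p (i.1 + j.1)) ∧
    ((Finset.univ.filter (fun i => 0 < hherm.eigenvalues i)).card : ℤ) -
        ((Finset.univ.filter (fun i => hherm.eigenvalues i < 0)).card : ℤ) =
      ((f.map (algebraMap ℚ ℝ)).roots.toFinset.card : ℤ) := by
  classical
  set g := f.map (algebraMap ℚ ℂ) with hgdef
  have hgmonic : g.Monic := hmonic.map _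
  have hg0 : g ≠ 0 := hgmonic.ne_zero
  have hgdeg : g.natDegree = n := by rw [hgdef, natDegree_map, hdeg]
  set e : Fin n ≃ {x // x ∈ g.roots.toFinset} := (Finset.equivFinOfCardEq hsep).symm with he
  set α : Fin n → ℂ := fun a => ((e a : {x // x ∈ g.roots.toFinset}) : ℂ) with hα
  have hmem : ∀ a, (α a) ∈ g.roots := fun a => Multiset.mem_toFinset.mp (e a).2
  have hroot : ∀ a, g.IsRoot (α a) := fun a => (mem_roots hg0).mp (hmem a)
  have hinj : Function.Injective α := fun a b h => e.injective (Subtype.ext h)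
  have hnodup : g.roots.Nodup := by
    have hsplits : Multiset.card g.roots = g.natDegree :=
      (splits_iff_card_roots).mp (IsAlgClosed.splits g)
    exact Multiset.toFinset_card_eq_card_iff_nodup.mp
      (hsep.trans (hgdeg.symm.trans hsplits.symm))
  have hsum : ∀ k, ((g.roots.map (· ^ k)).sum) = ∑ a, α a ^ k := by
    intro k
    calc (g.roots.map (· ^ k)).sum = ∑ x ∈ g.roots.toFinset, x ^ k := by
          rw [Finset.sum]
          congr 1
          rw [Multiset.toFinset_val, hnodup.dedup]
      _ = ∑ x : {x // x ∈ g.roots.toFinset}, (x : ℂ) ^ k :=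
          (Finset.sum_coe_sort _ _).symm
      _ = ∑ a, α a ^ k :=
          (Equiv.sum_comp e (fun x : {x // x ∈ g.roots.toFinset} => (x : ℂ) ^ k)).symm
  constructor
  · intro i j
    have h := trace_map_eq_sum_pow i.pos f hmonic hdeg α hroot hinj ((i : ℕ) + (j : ℕ))
    rw [hp]
    exact h.trans (hsum _).symm
  · rcases Nat.eq_zero_or_pos n with hn0 | hn
    · subst hn0
      have hf1 : f = 1 := Polynomial.eq_one_of_monic_natDegree_zero hmonic hdeg
      simp [hf1]
    · have hconjmem : ∀ a, (starRingEnd ℂ) (α a) ∈ g.roots.toFinset := by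
        intro a
        rw [Multiset.mem_toFinset, mem_roots hg0]
        have hcomm : g.eval ((starRingEnd ℂ) (α a)) = (starRingEnd ℂ) (g.eval (α a)) := by
          rw [hgdef, eval_map, eval_map, Polynomial.hom_eval₂]
          congr 1
          exact Subsingleton.elim _ _
        show g.eval _ = 0
        rw [hcomm, hroot a, map_zero]
      set σ : Fin n → Fin n := fun a => e.symm ⟨(starRingEnd ℂ) (α a), hconjmem a⟩ with hσ
      have hσα : ∀ a, α (σ a) = (starRingEnd ℂ) (α a) := by
        intro a
        show ((e (e.symm ⟨(starRingEnd ℂ) (α a), hconjmem a⟩) :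
          {x // x ∈ g.roots.toFinset}) : ℂ) = _
        rw [e.apply_symm_apply]
      have hσσ : Function.Involutive σ := by
        intro a
        have h1 : (⟨(starRingEnd ℂ) (α (σ a)), hconjmem (σ a)⟩ :
            {x // x ∈ g.roots.toFinset}) = e a := by
          apply Subtype.ext
          show (starRingEnd ℂ) (α (σ a)) = α a
          rw [hσα a]
          exact Complex.conj_conj _
        show e.symm ⟨(starRingEnd ℂ) (α (σ a)), hconjmem (σ a)⟩ = a
        rw [h1, e.symm_apply_apply]
      have himσ : ∀ a, (α (σ a)).im = -(α a).im := by
        intro a; rw [hσα a]; simp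
      -- decomposition of Hr
      have hHdecomp : Hr = (Bmat α)ᵀ * Matrix.diagonal (dvec α) * (Bmat α) := by
        ext i j
        have hC : (Hr i j : ℂ) = ∑ a, α a ^ ((i : ℕ) + (j : ℕ)) := by
          rw [hHr i j, hp]; exact hsum _
        have hRe : Hr i j = ∑ a, (α a ^ ((i : ℕ) + (j : ℕ))).re := by
          have h2 := congrArg Complex.re hC
          rw [Complex.ofReal_re, Complex.re_sum] at h2
          exact h2
        rw [hRe, key_sum hinj hσσ hσα i j, Matrix.mul_assoc, Matrix.mul_apply]
        exact Finset.sum_congr rfl fun a _ => by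
          rw [Matrix.transpose_apply, Matrix.diagonal_mul]
      have hBdet : IsUnit (Bmat α).det := isUnit_Bmat_det hinj hσσ hσα
      -- eigen decomposition
      have hspec := hherm.spectral_theorem
      set U : Matrix (Fin n) (Fin n) ℝ :=
        (hherm.eigenvectorUnitary : Matrix (Fin n) (Fin n) ℝ) with hUdef
      have hstar : star U = Uᵀ := by
        rw [Matrix.star_eq_conjTranspose, Matrix.conjTranspose_eq_transpose_of_trivial]
      have hofreal : (RCLike.ofReal ∘ hherm.eigenvalues : Fin n → ℝ) = hherm.eigenvalues := by
        funext a
        rw [Function.comp_apply, RCLike.ofReal_real_eq_id]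
        rfl
      have hEig : Hr = (Uᵀ)ᵀ * Matrix.diagonal hherm.eigenvalues * Uᵀ := by
        rw [Matrix.transpose_transpose, ← hstar, ← hofreal]
        exact hspec
      have hUdet : IsUnit (Uᵀ).det := by
        have hu : U * star U = 1 := Matrix.mem_unitaryGroup_iff.mp hherm.eigenvectorUnitary.2
        have hdet : U.det * (star U).det = 1 := by rw [← Matrix.det_mul, hu, Matrix.det_one]
        rw [Matrix.det_transpose]
        exact IsUnit.of_mul_eq_one _ hdet
      have hposeq := inertia_pos_eq hUdet hBdet hEig hHdecomp
      have hnegeq := inertia_neg_eq hUdet hBdet hEig hHdecomp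
      -- identify the d-counts with root counts
      have hdpos : ∀ a, (0 < dvec α a ↔ ¬ (α a).im < 0) := by
        intro a
        rw [dvec]
        split_ifs with h0 hpos
        · simp [h0]
        · norm_num
          exact le_of_lt hpos
        · norm_num
          exact lt_of_le_of_ne (not_lt.mp hpos) h0
      have hdneg : ∀ a, (dvec α a < 0 ↔ (α a).im < 0) := by
        intro a
        rw [dvec]
        split_ifs with h0 hpos
        · norm_num [h0]
        · norm_num
          exact le_of_lt hpos
        · norm_num
          exact lt_of_le_of_ne (not_lt.mp hpos) h0
      -- counting roots
      have hPN : (univ.filter fun a => 0 < (α a).im).card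
          = (univ.filter fun a => (α a).im < 0).card := by
        apply Finset.card_bij' (fun a _ => σ a) (fun b _ => σ b)
        · intro a ha
          rw [mem_filter] at ha ⊢
          exact ⟨mem_univ _, by rw [himσ a]; linarith [ha.2]⟩
        · intro b hb
          rw [mem_filter] at hb ⊢
          exact ⟨mem_univ _, by rw [himσ b]; linarith [hb.2]⟩
        · intro a _; exact hσσ a
        · intro b _; exact hσσ b
      have htri : univ.filter (fun a => ¬ (α a).im < 0)
          = univ.filter (fun a => (α a).im = 0) ∪ univ.filter (fun a => 0 < (α a).im) := by
        ext a
        simp only [mem_filter, mem_union, mem_univ, true_and]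
        constructor
        · intro h
          rcases lt_or_eq_of_le (not_lt.mp h) with h' | h'
          · exact Or.inr h'
          · exact Or.inl h'.symm
        · rintro (h | h)
          · rw [h]; exact lt_irrefl 0
          · exact asymm h
      have hdisj : Disjoint (univ.filter (fun a => (α a).im = 0))
          (univ.filter (fun a => 0 < (α a).im)) := by
        rw [Finset.disjoint_left]
        intro a ha hb
        rw [mem_filter] at ha hb
        rw [ha.2] at hb
        exact lt_irrefl 0 hb.2
      have hsplit : (univ.filter (fun a => (α a).im < 0)).card
          + (univ.filter (fun a => ¬ (α a).im < 0)).card = n := by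
        have := Finset.card_filter_add_card_filter_not
          (s := (univ : Finset (Fin n))) (p := fun a => (α a).im < 0)
        simpa using this
      -- real roots count
      have hRc : (univ.filter fun a => (α a).im = 0).card
          = (f.map (algebraMap ℚ ℝ)).roots.toFinset.card := by
        set fR := f.map (algebraMap ℚ ℝ) with hfR
        have hfR0 : fR ≠ 0 := (hmonic.map _).ne_zero
        have hmapRC : fR.map (algebraMap ℝ ℂ) = g := by
          rw [hfR, hgdef, Polynomial.map_map]
          congr 1
        apply Finset.card_bij (fun a _ => (α a).re)
        · intro a ha
          have h0 : (α a).im = 0 := (mem_filter.mp ha).2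
          rw [Multiset.mem_toFinset, mem_roots hfR0]
          have hα' : (algebraMap ℝ ℂ) ((α a).re) = α a := by
            apply Complex.ext <;> simp [h0]
          have hval : (algebraMap ℝ ℂ) (fR.eval ((α a).re)) = g.eval (α a) := by
            rw [← Polynomial.eval₂_at_apply, hα', ← eval_map, hmapRC]
          show fR.IsRoot ((α a).re)
          have h2 : (algebraMap ℝ ℂ) (fR.eval ((α a).re)) = 0 := by
            rw [hval]; exact hroot a
          exact (_root_.map_eq_zero (algebraMap ℝ ℂ)).mp h2
        · intro a ha b hb hab
          apply hinj
          apply Complex.ext hab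
          rw [(mem_filter.mp ha).2, (mem_filter.mp hb).2]
        · intro t ht
          rw [Multiset.mem_toFinset, mem_roots hfR0] at ht
          have hz : ((t : ℝ) : ℂ) ∈ g.roots := by
            rw [mem_roots hg0]
            show g.eval _ = 0
            rw [← hmapRC,
              show ((t : ℝ) : ℂ) = algebraMap ℝ ℂ t from (congrFun Complex.coe_algebraMap t).symm,
              Polynomial.eval_map, Polynomial.eval₂_at_apply,
              show fR.eval t = 0 from ht, map_zero]
          refine ⟨e.symm ⟨((t : ℝ) : ℂ), Multiset.mem_toFinset.mpr hz⟩, ?_, ?_⟩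
          · rw [mem_filter]
            refine ⟨mem_univ _, ?_⟩
            show ((e (e.symm ⟨((t : ℝ) : ℂ), _⟩) : {x // x ∈ g.roots.toFinset}) : ℂ).im = 0
            rw [e.apply_symm_apply]
            simp
          · show ((e (e.symm ⟨((t : ℝ) : ℂ), _⟩) : {x // x ∈ g.roots.toFinset}) : ℂ).re = t
            rw [e.apply_symm_apply]
            simp
      -- final arithmetic
      have hcard_pos : (univ.filter fun j => 0 < dvec α j).card
          = (univ.filter fun a => ¬ (α a).im < 0).card := by
        congr 1
        apply Finset.filter_congr
        intro a _
        exact hdpos a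
      have hcard_neg : (univ.filter fun j => dvec α j < 0).card
          = (univ.filter fun a => (α a).im < 0).card := by
        congr 1
        apply Finset.filter_congr
        intro a _
        exact hdneg a
      have htricard : (univ.filter (fun a => ¬ (α a).im < 0)).card
          = (univ.filter (fun a => (α a).im = 0)).card
            + (univ.filter (fun a => 0 < (α a).im)).card := by
        rw [htri, Finset.card_union_of_disjoint hdisj]
      rw [hposeq, hnegeq, hcard_pos, hcard_neg, htricard, hRc, hPN]
      push_cast
      ring
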